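/- 1D commuting diagram property: let Q₀ denote L²(0,1)-orthogonal projection onto P_k([0,1]) and let q ∈ C¹([0,1]). Define the weak function Q_h q = (Q₀ q, q(0), q(1)) and its discrete weak derivative d_w(Q_h q) ∈ P_r([0,1]) by ∫₀¹ d_w(Q_h q)·φ = −∫₀¹ (Q₀q)·φ′ + q(1)φ(1) − q(0)φ(0) for all φ ∈ P_r([0,1]). If k ≥ r−1, then ∫₀¹ d_w(Q_h q)·φ = ∫₀¹ q′·φ for all φ ∈ P_r([0,1]). -/

import Mathlib

open MeasureTheory intervalIntegral Polynomial

theorem commuting_diagram_1d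
    (r k : ℕ) (hkr : r ≤ k + 1) (q : ℝ → ℝ) (hq : ContDiff ℝ 1 q)
    (p : Polynomial ℝ) (hp : p.natDegree ≤ k)
    (hproj : ∀ φ : Polynomial ℝ, φ.natDegree ≤ k →
      (∫ x in (0:ℝ)..1, (q x - p.eval x) * φ.eval x) = 0)
    (d : Polynomial ℝ) (hd : d.natDegree ≤ r)
    (hdef : ∀ φ : Polynomial ℝ, φ.natDegree ≤ r →
      (∫ x in (0:ℝ)..1, d.eval x * φ.eval x) =
        -(∫ x in (0:ℝ)..1, p.eval x * (derivative φ).eval x)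
          + q 1 * φ.eval 1 - q 0 * φ.eval 0) :
    ∀ φ : Polynomial ℝ, φ.natDegree ≤ r →
      (∫ x in (0:ℝ)..1, d.eval x * φ.eval x) = ∫ x in (0:ℝ)..1, deriv q x * φ.eval x := by
  intro φ hφ
  have hqc : Continuous q := hq.continuous
  have hq' : Continuous (deriv q) := (hq.iterate_deriv' 0 1).continuous
  -- degree of derivative
  have hdφ : (derivative φ).natDegree ≤ k := by
    have := Polynomial.natDegree_derivative_le φ
    omega
  have hproj' := hproj (derivative φ) hdφ
  -- split the projection integral
  have hint1 : IntervalIntegrable (fun x => q x * (derivative φ).eval x) volume 0 1 :=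
    (hqc.mul (φ.derivative.continuous_aeval)).intervalIntegrable _ _
  have hint2 : IntervalIntegrable (fun x => p.eval x * (derivative φ).eval x) volume 0 1 :=
    ((p.continuous_aeval).mul (φ.derivative.continuous_aeval)).intervalIntegrable _ _
  have hsplit : (∫ x in (0:ℝ)..1, q x * (derivative φ).eval x)
      = ∫ x in (0:ℝ)..1, p.eval x * (derivative φ).eval x := by
    have : (∫ x in (0:ℝ)..1, (q x - p.eval x) * (derivative φ).eval x)
        = (∫ x in (0:ℝ)..1, q x * (derivative φ).eval x)
          - ∫ x in (0:ℝ)..1, p.eval x * (derivative φ).eval x := by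
      rw [← intervalIntegral.integral_sub hint1 hint2]
      congr 1; ext x; ring
    rw [this] at hproj'
    linarith
  -- integration by parts
  have hibp : (∫ x in (0:ℝ)..1, q x * (derivative φ).eval x)
      = q 1 * φ.eval 1 - q 0 * φ.eval 0 - ∫ x in (0:ℝ)..1, deriv q x * φ.eval x := by
    have := intervalIntegral.integral_mul_deriv_eq_deriv_mul
      (u := q) (u' := deriv q) (v := fun x => φ.eval x) (v' := fun x => (derivative φ).eval x)
      (a := 0) (b := 1)
      (fun x _ => (hq.differentiable one_ne_zero).differentiableAt.hasDerivAt)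
      (fun x _ => φ.hasDerivAt x)
      (hq'.intervalIntegrable _ _)
      ((φ.derivative.continuous_aeval).intervalIntegrable _ _)
    linarith [this]
  have := hdef φ hφ
  rw [this, ← hsplit, hibp]
  ring
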